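/- If H ∈ (0,1), K ∈ (0,1) and 2HK = 1, then y·h(y) converges to (1−2H)/4 as y → ∞. -/

import Mathlib

open Filter Real

lemma aux_limit (a K : ℝ) (ha1 : 1 < a) (hK0 : 0 < K) (hK1 : K < 1) (haK : a * K = 1) :
    Tendsto (fun t : ℝ => ((2:ℝ) - t - 2^(1-K) * (1 + (1-t)^a)^K) / (t*t))
      (nhdsWithin 0 (Set.Ioi 0)) (nhds ((1-a)/4)) := by
  have ha0 : (0:ℝ) < a := lt_trans one_pos ha1
  set c : ℝ := 2^(1-K) with hc
  have hc0 : 0 < c := Real.rpow_pos_of_pos two_pos _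
  set g : ℝ → ℝ := fun t => 2 - t - c * (1 + (1-t)^a)^K with hg
  set g1 : ℝ → ℝ := fun t =>
    -1 - c * ((-1 * a * (1-t)^(a-1)) * K * (1 + (1-t)^a)^(K-1)) with hg1
  set g2 : ℝ → ℝ := fun t =>
    -(c * (K * ((-1 * a * ((-1) * (a-1) * (1-t)^(a-1-1))) * (1 + (1-t)^a)^(K-1)
      + (-1 * a * (1-t)^(a-1)) * ((-1 * a * (1-t)^(a-1)) * (K-1) * (1 + (1-t)^a)^(K-1-1))))) with hg2
  have hmem : Set.Ioo (0:ℝ) (1/2) ∈ nhdsWithin (0:ℝ) (Set.Ioi 0) :=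
    Ioo_mem_nhdsGT_of_mem (by norm_num)
  have hbase : ∀ t ∈ Set.Ioo (0:ℝ) (1/2), (0:ℝ) < 1 - t := fun t ht => by
    have := ht.2; linarith
  have hpsi : ∀ t ∈ Set.Ioo (0:ℝ) (1/2), (0:ℝ) < 1 + (1-t)^a := fun t ht => by
    have := Real.rpow_pos_of_pos (hbase t ht) a; linarith
  -- derivative of g
  have hder1 : ∀ t ∈ Set.Ioo (0:ℝ) (1/2), HasDerivAt g (g1 t) t := by
    intro t ht
    have h1 : HasDerivAt (fun t : ℝ => 1 - t) (-1) t := by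
      simpa using (hasDerivAt_id t).const_sub 1
    have h2 : HasDerivAt (fun t : ℝ => (1-t)^a) (-1 * a * (1-t)^(a-1)) t :=
      h1.rpow_const (Or.inl (hbase t ht).ne')
    have h3 : HasDerivAt (fun t : ℝ => 1 + (1-t)^a) (-1 * a * (1-t)^(a-1)) t :=
      h2.const_add 1
    have h4 : HasDerivAt (fun t : ℝ => (1 + (1-t)^a)^K)
        ((-1 * a * (1-t)^(a-1)) * K * (1 + (1-t)^a)^(K-1)) t :=
      h3.rpow_const (Or.inl (hpsi t ht).ne')
    have h5 := ((hasDerivAt_id t).const_sub 2).sub (h4.const_mul c)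
    exact h5
  -- derivative of g1
  have hder2 : ∀ t ∈ Set.Ioo (0:ℝ) (1/2), HasDerivAt g1 (g2 t) t := by
    intro t ht
    have h1 : HasDerivAt (fun t : ℝ => 1 - t) (-1) t := by
      simpa using (hasDerivAt_id t).const_sub 1
    have h3 : HasDerivAt (fun t : ℝ => 1 + (1-t)^a) (-1 * a * (1-t)^(a-1)) t :=
      (h1.rpow_const (Or.inl (hbase t ht).ne')).const_add 1
    have h5 : HasDerivAt (fun t : ℝ => (1-t)^(a-1)) ((-1) * (a-1) * (1-t)^(a-1-1)) t :=
      h1.rpow_const (Or.inl (hbase t ht).ne')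
    have h6 : HasDerivAt (fun t : ℝ => (1 + (1-t)^a)^(K-1))
        ((-1 * a * (1-t)^(a-1)) * (K-1) * (1 + (1-t)^a)^(K-1-1)) t :=
      h3.rpow_const (Or.inl (hpsi t ht).ne')
    have h7 : HasDerivAt (fun t : ℝ => -1 * a * (1-t)^(a-1))
        (-1 * a * ((-1) * (a-1) * (1-t)^(a-1-1))) t := by
      exact h5.const_mul (-1 * a)
    have h8 := (h7.mul h6).const_mul (c * K)
    have h9 := h8.const_sub (-1)
    have h10 : HasDerivAt (fun t : ℝ =>
        -1 - c * K * ((-1 * a * (1-t)^(a-1)) * (1 + (1-t)^a)^(K-1)))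
        (-(c * K * ((-1 * a * ((-1) * (a-1) * (1-t)^(a-1-1))) * (1 + (1-t)^a)^(K-1)
          + (-1 * a * (1-t)^(a-1)) * ((-1 * a * (1-t)^(a-1)) * (K-1) * (1 + (1-t)^a)^(K-1-1))))) t := h9
    have h11 : g1 = fun t : ℝ =>
        -1 - c * K * ((-1 * a * (1-t)^(a-1)) * (1 + (1-t)^a)^(K-1)) := by
      funext t; simp only [hg1]; ring
    rw [h11]
    convert h10 using 1
    simp only [hg2]; ring
  -- value facts
  have hc2K : c * (2:ℝ)^K = 2 := by
    rw [hc, ← Real.rpow_add two_pos]; norm_num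
  have hc2K1 : c * (2:ℝ)^(K-1) = 1 := by
    rw [hc, ← Real.rpow_add two_pos]; norm_num
  have hc2K2 : c * (2:ℝ)^(K-1-1) = 1/2 := by
    rw [hc, ← Real.rpow_add two_pos, show (1-K)+(K-1-1) = -1 by ring, Real.rpow_neg_one]
    norm_num
  have h2eq : (1:ℝ) + (1-(0:ℝ))^a = 2 := by
    rw [sub_zero, Real.one_rpow]; norm_num
  -- limits at 0 of g, g1, g2 by continuity
  have hcont1 : ContinuousAt (fun t : ℝ => (1-t)^(a-1)) 0 := by
    apply ContinuousAt.rpow_const (continuousAt_const.sub continuousAt_id)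
    left; norm_num
  have hcontpsi : ContinuousAt (fun t : ℝ => 1 + (1-t)^a) 0 := by
    apply continuousAt_const.add
    apply ContinuousAt.rpow_const (continuousAt_const.sub continuousAt_id)
    left; norm_num
  have hpsine : (1:ℝ) + (1-(0:ℝ))^a ≠ 0 := by rw [h2eq]; norm_num
  have hgcont : ContinuousAt g 0 := by
    apply ContinuousAt.sub (continuousAt_const.sub continuousAt_id)
    exact continuousAt_const.mul (hcontpsi.rpow_const (Or.inl hpsine))
  have hg0 : g 0 = 0 := by
    simp only [hg, sub_zero, Real.one_rpow, show (1:ℝ)+1 = 2 by norm_num]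
    linear_combination -hc2K
  have hgtends : Tendsto g (nhdsWithin 0 (Set.Ioi 0)) (nhds 0) := by
    have := tendsto_nhdsWithin_of_tendsto_nhds (s := Set.Ioi 0) hgcont.tendsto
    rwa [hg0] at this
  have hg1cont : ContinuousAt g1 0 := by
    apply ContinuousAt.sub continuousAt_const
    apply continuousAt_const.mul
    apply ContinuousAt.mul
    apply ContinuousAt.mul
    · exact continuousAt_const.mul hcont1
    · exact continuousAt_const
    · exact hcontpsi.rpow_const (Or.inl hpsine)
  have hg10 : g1 0 = 0 := by
    simp only [hg1, sub_zero, Real.one_rpow, show (1:ℝ)+1 = 2 by norm_num]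
    linear_combination (K*a)*hc2K1 + haK
  have hg1tends : Tendsto g1 (nhdsWithin 0 (Set.Ioi 0)) (nhds 0) := by
    have := tendsto_nhdsWithin_of_tendsto_nhds (s := Set.Ioi 0) hg1cont.tendsto
    rwa [hg10] at this
  have hcont2 : ContinuousAt (fun t : ℝ => (1-t)^(a-1-1)) 0 := by
    apply ContinuousAt.rpow_const (continuousAt_const.sub continuousAt_id)
    left; norm_num
  have hcontK1 : ContinuousAt (fun t : ℝ => (1+(1-t)^a)^(K-1)) 0 :=
    hcontpsi.rpow_const (Or.inl hpsine)
  have hcontK2 : ContinuousAt (fun t : ℝ => (1+(1-t)^a)^(K-1-1)) 0 :=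
    hcontpsi.rpow_const (Or.inl hpsine)
  have hg2cont : ContinuousAt g2 0 := by
    exact (continuousAt_const.mul (continuousAt_const.mul
      (((continuousAt_const.mul (continuousAt_const.mul hcont2)).mul hcontK1).add
        ((continuousAt_const.mul hcont1).mul
          (((continuousAt_const.mul hcont1).mul continuousAt_const).mul hcontK2))))).neg
  have hg20 : g2 0 = -(a-1)/2 := by
    simp only [hg2, sub_zero, Real.one_rpow, show (1:ℝ)+1 = 2 by norm_num]
    have h1 : K*a*(a-1) = a-1 := by linear_combination (a-1)*haK
    have h2 : K*a*a*(K-1) = 1 - a := by linear_combination (a*K - a + 1)*haK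
    linear_combination (-(K*a*(a-1)))*hc2K1 + (-(K*a*a*(K-1)))*hc2K2 - h1 - h2/2
  have hg2tends : Tendsto g2 (nhdsWithin 0 (Set.Ioi 0)) (nhds (-(a-1)/2)) := by
    have := tendsto_nhdsWithin_of_tendsto_nhds (s := Set.Ioi 0) hg2cont.tendsto
    rwa [hg20] at this
  -- second L'Hopital
  have hlh2 : Tendsto (fun t => g1 t / (2*t)) (nhdsWithin 0 (Set.Ioi 0)) (nhds ((1-a)/4)) := by
    apply HasDerivAt.lhopital_zero_nhdsGT (f' := g2) (g' := fun _ => 2)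
    · exact eventually_of_mem hmem hder2
    · filter_upwards with t
      simpa using (hasDerivAt_id t).const_mul 2
    · filter_upwards with t; norm_num
    · exact hg1tends
    · have : Tendsto (fun t : ℝ => 2*t) (nhds 0) (nhds (2*0)) :=
        (continuous_const.mul continuous_id).tendsto 0
      rw [mul_zero] at this
      exact this.mono_left nhdsWithin_le_nhds
    · have h := hg2tends.div_const 2
      rw [show -(a-1)/2/2 = (1-a)/4 by ring] at h
      exact h
  -- first L'Hopital
  have hlh1 : Tendsto (fun t => g t / (t*t)) (nhdsWithin 0 (Set.Ioi 0)) (nhds ((1-a)/4)) := by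
    apply HasDerivAt.lhopital_zero_nhdsGT (f' := g1) (g' := fun t => 2*t)
    · exact eventually_of_mem hmem hder1
    · filter_upwards with t
      simpa [two_mul] using (hasDerivAt_id' t).fun_mul (hasDerivAt_id' t)
    · filter_upwards [self_mem_nhdsWithin] with t ht
      have : (0:ℝ) < t := ht
      positivity
    · exact hgtends
    · have : Tendsto (fun t : ℝ => t*t) (nhds 0) (nhds ((0:ℝ)*0)) :=
        (continuous_id.mul continuous_id).tendsto 0
      rw [mul_zero] at this
      exact this.mono_left nhdsWithin_le_nhds
    · exact hlh2
  exact hlh1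

/-- For `H ∈ (0,1)`, `K ∈ (0,1)` with `2HK = 1`, `y · h(y) → (1 - 2H)/4` as `y → ∞`,
where `h(y) = y^{2HK} + (y-1)^{2HK} - (2/2^K)(y^{2H} + (y-1)^{2H})^K`. -/
theorem bifBm_y_mul_h_tendsto (H K : ℝ) (hH : H ∈ Set.Ioo (0:ℝ) 1) (hK : K ∈ Set.Ioo (0:ℝ) 1)
    (hHK : 2*H*K = 1) :
    Tendsto (fun y : ℝ =>
        y * (y ^ (2*H*K) + (y - 1) ^ (2*H*K)
          - (2 / 2 ^ K) * (y ^ (2*H) + (y - 1) ^ (2*H)) ^ K))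
      atTop (nhds ((1 - 2*H) / 4)) := by
  obtain ⟨hH0, hH1⟩ := hH
  obtain ⟨hK0, hK1⟩ := hK
  have ha1 : 1 < 2*H := by nlinarith
  have hlim := aux_limit (2*H) K ha1 hK0 hK1 hHK
  have htinv : Tendsto (fun y : ℝ => y⁻¹) atTop (nhdsWithin 0 (Set.Ioi 0)) := by
    rw [tendsto_nhdsWithin_iff]
    refine ⟨tendsto_inv_atTop_zero, ?_⟩
    filter_upwards [eventually_gt_atTop 0] with y hy
    exact inv_pos.mpr hy
  have hcomp := hlim.comp htinv
  simp only [Function.comp_def] at hcomp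
  have hconst : (1 - 2*H)/4 = (1-(2*H))/4 := by ring
  rw [hconst]
  apply hcomp.congr'
  filter_upwards [eventually_gt_atTop 1] with y hy
  have hy0 : (0:ℝ) < y := lt_trans one_pos hy
  have hy1 : (0:ℝ) < y - 1 := by linarith
  have hyH : (0:ℝ) < y^(2*H) := Real.rpow_pos_of_pos hy0 _
  have h1 : 1 - y⁻¹ = (y-1)/y := by field_simp
  have h2 : ((y-1)/y)^(2*H) = (y-1)^(2*H)/y^(2*H) := Real.div_rpow hy1.le hy0.le _
  have h3 : 1 + (y-1)^(2*H)/y^(2*H) = (y^(2*H)+(y-1)^(2*H))/y^(2*H) := by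
    field_simp
  have hA0 : (0:ℝ) ≤ y^(2*H)+(y-1)^(2*H) := by positivity
  have h4 : ((y^(2*H)+(y-1)^(2*H))/y^(2*H))^K
      = (y^(2*H)+(y-1)^(2*H))^K / (y^(2*H))^K := Real.div_rpow hA0 hyH.le _
  have h5 : (y^(2*H))^K = y := by
    rw [← Real.rpow_mul hy0.le, hHK, Real.rpow_one]
  have hc : (2:ℝ)^(1-K) = 2 / 2^K := by
    rw [Real.rpow_sub two_pos, Real.rpow_one]
  show (2 - y⁻¹ - 2^(1-K) * (1 + (1-y⁻¹)^(2*H))^K)/(y⁻¹*y⁻¹)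
      = y * (y ^ (2*H*K) + (y - 1) ^ (2*H*K) - (2 / 2^K) * (y^(2*H) + (y-1)^(2*H))^K)
  rw [h1, h2, h3, h4, h5, hc, hHK, Real.rpow_one, Real.rpow_one]
  field_simp
  ring
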